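/- Let k ≥ 2 be an integer and define f : ℝ → ℝ by f(ρ) = (1 + cosh ρ)^{-(k-1)}. Then for every ρ > 0 and every real u with 0 ≤ u ≤ 1, one has k·f'(ρ)·coth ρ - u·(f'(ρ)·coth ρ - f''(ρ)) ≤ -k(k-1)/(1 + cosh ρ)^k, and equality holds if and only if u = 1. -/

import Mathlib

/-- For an integer `k ≥ 2` and `f ρ = (1 + cosh ρ)^{-(k-1)}`, for every `ρ > 0` and every
`u ∈ [0,1]`, `k·f'(ρ)·coth ρ - u·(f'(ρ)·coth ρ - f''(ρ)) ≤ -k(k-1)/(1+cosh ρ)^k`, with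
equality if and only if `u = 1`. Here `coth ρ = cosh ρ / sinh ρ`. -/
theorem stmt3 (k : ℕ) (hk : 2 ≤ k) (f : ℝ → ℝ)
    (hf : ∀ ρ : ℝ, f ρ = ((1 + Real.cosh ρ) ^ (k - 1))⁻¹) :
    ∀ ρ : ℝ, 0 < ρ → ∀ u : ℝ, 0 ≤ u → u ≤ 1 →
      ((k : ℝ) * deriv f ρ * (Real.cosh ρ / Real.sinh ρ)
          - u * (deriv f ρ * (Real.cosh ρ / Real.sinh ρ) - deriv (deriv f) ρ)
        ≤ -((k : ℝ) * ((k : ℝ) - 1)) / (1 + Real.cosh ρ) ^ k) ∧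
      ((k : ℝ) * deriv f ρ * (Real.cosh ρ / Real.sinh ρ)
          - u * (deriv f ρ * (Real.cosh ρ / Real.sinh ρ) - deriv (deriv f) ρ)
        = -((k : ℝ) * ((k : ℝ) - 1)) / (1 + Real.cosh ρ) ^ k ↔ u = 1) := by
  have hfe : f = fun ρ => ((1 + Real.cosh ρ) ^ (k - 1))⁻¹ := funext hf
  subst hfe
  obtain ⟨m, rfl⟩ : ∃ m, k = m + 2 := ⟨k - 2, by omega⟩
  have hA : ∀ ρ : ℝ, 0 < 1 + Real.cosh ρ := fun ρ => by
    have := Real.cosh_pos ρ; linarith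
  have hd1 : ∀ ρ : ℝ, HasDerivAt (fun ρ => ((1 + Real.cosh ρ) ^ (m + 2 - 1))⁻¹)
      (-((m : ℝ) + 1) * Real.sinh ρ / (1 + Real.cosh ρ) ^ (m + 2)) ρ := by
    intro ρ
    have h1 : HasDerivAt (fun ρ : ℝ => 1 + Real.cosh ρ) (Real.sinh ρ) ρ :=
      (Real.hasDerivAt_cosh ρ).const_add 1
    have h2 := (h1.pow (m + 1)).inv (pow_ne_zero _ (hA ρ).ne')
    have hme : m + 2 - 1 = m + 1 := rfl
    rw [hme]
    refine h2.congr_deriv ?_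
    simp only [Pi.pow_apply]
    have hAne : (1 + Real.cosh ρ) ≠ 0 := (hA ρ).ne'
    have h3 : m + 1 - 1 = m := rfl
    rw [h3]
    have e2 : (1 + Real.cosh ρ) ^ (m + 2) = (1 + Real.cosh ρ) ^ m * (1 + Real.cosh ρ)^2 := by
      rw [show m + 2 = m + 2 from rfl, pow_add]
    have e1 : ((1 + Real.cosh ρ) ^ (m + 1))^2
        = (1 + Real.cosh ρ) ^ m * (1 + Real.cosh ρ)^2 * (1 + Real.cosh ρ) ^ m := by
      rw [← pow_mul]
      rw [show (m+1)*2 = (m + 2) + m from by ring, pow_add, pow_add]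
    rw [e2, e1]
    have hBne : (1 + Real.cosh ρ) ^ m ≠ 0 := pow_ne_zero _ hAne
    push_cast
    field_simp
  have hD1 : deriv (fun ρ => ((1 + Real.cosh ρ) ^ (m + 2 - 1))⁻¹)
      = fun ρ => -((m : ℝ) + 1) * Real.sinh ρ / (1 + Real.cosh ρ) ^ (m + 2) :=
    funext fun ρ => (hd1 ρ).deriv
  have hd2 : ∀ ρ : ℝ, HasDerivAt
      (fun ρ => -((m : ℝ) + 1) * Real.sinh ρ / (1 + Real.cosh ρ) ^ (m + 2))
      (((-((m : ℝ) + 1) * Real.cosh ρ) * (1 + Real.cosh ρ) ^ (m + 2)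
        - (-((m : ℝ) + 1) * Real.sinh ρ)
            * (((m : ℝ) + 2) * (1 + Real.cosh ρ) ^ (m + 1) * Real.sinh ρ))
        / ((1 + Real.cosh ρ) ^ (m + 2)) ^ 2) ρ := by
    intro ρ
    have h1 : HasDerivAt (fun ρ : ℝ => 1 + Real.cosh ρ) (Real.sinh ρ) ρ :=
      (Real.hasDerivAt_cosh ρ).const_add 1
    have hn : HasDerivAt (fun ρ : ℝ => -((m : ℝ) + 1) * Real.sinh ρ)
        (-((m : ℝ) + 1) * Real.cosh ρ) ρ := (Real.hasDerivAt_sinh ρ).const_mul _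
    have hdn := hn.div (h1.pow (m + 2)) (pow_ne_zero _ (hA ρ).ne')
    refine hdn.congr_deriv ?_
    simp only [Pi.pow_apply]
    have h3 : m + 2 - 1 = m + 1 := rfl
    rw [h3]
    push_cast
    ring
  intro ρ hρ u hu0 hu1
  rw [hD1, (hd2 ρ).deriv]
  set c := Real.cosh ρ with hcdef
  set s := Real.sinh ρ with hsdef
  have hs0 : 0 < s := by
    have h0 : Real.sinh 0 < Real.sinh ρ := by rw [Real.sinh_lt_sinh]; exact hρ
    simpa [hsdef] using h0
  have hc1 : 1 < c := by rw [hcdef]; exact Real.one_lt_cosh.mpr hρ.ne'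
  have hcs : c ^ 2 = s ^ 2 + 1 := by rw [hcdef, hsdef]; exact Real.cosh_sq ρ
  have hA0 : (0:ℝ) < 1 + c := hA ρ
  have hAne : (1 + c) ≠ 0 := hA0.ne'
  have hsne : s ≠ 0 := hs0.ne'
  have key : ((m:ℝ) + 2) * (-((m : ℝ) + 1) * s / (1 + c) ^ (m + 2)) * (c / s)
      - u * ((-((m : ℝ) + 1) * s / (1 + c) ^ (m + 2)) * (c / s)
        - ((-((m : ℝ) + 1) * c) * (1 + c) ^ (m + 2)
            - (-((m : ℝ) + 1) * s) * (((m : ℝ) + 2) * (1 + c) ^ (m + 1) * s))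
            / ((1 + c) ^ (m + 2)) ^ 2)
      = -(((m:ℝ)+2) * (((m:ℝ)+2) - 1)) / (1 + c) ^ (m + 2)
        - (1 - u) * (((m:ℝ)+2) * ((m:ℝ)+1) * (c^2 - 1) / (1 + c) ^ (m + 3)) := by
    have e2 : (1 + c) ^ (m + 2) = (1 + c) ^ (m+1) * (1 + c) := pow_succ _ _
    have e3 : (1 + c) ^ (m + 3) = (1 + c) ^ (m+1) * (1 + c)^2 := by
      rw [show m+3 = (m+1)+2 from rfl, pow_add]
    rw [e2, e3]
    set B := (1 + c) ^ (m+1) with hB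
    have hBne : B ≠ 0 := pow_ne_zero _ hAne
    have hNc : -((m : ℝ) + 1) * s / (B * (1 + c)) * (c / s)
        = -((m : ℝ) + 1) * c / (B * (1 + c)) := by
      field_simp
    have hD2 : ((-((m : ℝ) + 1) * c) * (B * (1 + c))
          - (-((m : ℝ) + 1) * s) * (((m : ℝ) + 2) * B * s)) / (B * (1 + c)) ^ 2
        = -((m : ℝ) + 1) * c / (B * (1 + c))
          + ((m:ℝ)+1) * ((m:ℝ)+2) * (c^2 - 1) / (B * (1 + c)^2) := by
      rw [show c^2 - 1 = s^2 from by linarith]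
      field_simp
      ring
    rw [hNc, hD2]
    field_simp
    ring
  have hC : 0 < ((m:ℝ)+2) * ((m:ℝ)+1) * (c^2 - 1) / (1 + c) ^ (m + 3) := by
    apply div_pos
    · have h1 : (0:ℝ) < c^2 - 1 := by nlinarith
      positivity
    · positivity
  push_cast
  rw [key]
  constructor
  · nlinarith [mul_nonneg (sub_nonneg.mpr hu1) hC.le]
  · constructor
    · intro h
      have h0 : (1 - u) * (((m:ℝ)+2) * ((m:ℝ)+1) * (c^2 - 1) / (1 + c) ^ (m + 3)) = 0 := by
        linarith
      rcases mul_eq_zero.mp h0 with h1 | h2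
      · linarith
      · exact absurd h2 hC.ne'
    · intro h; rw [h]; ring
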